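/- Let (Λ, μ) be a probability space and let f, g, h : Λ → ℝ be measurable functions taking only the values −1 and 1. Then ∫ f·g dμ + ∫ g·h dμ + ∫ f·h dμ ≥ −1. -/

import Mathlib

open MeasureTheory

/-- For any three ±1-valued observables admitting a joint distribution (i.e.
functions of a common hidden state), the sum of the three pairwise
correlations is at least −1. -/
theorem three_correlations_ge_neg_one {Λ : Type*} [MeasurableSpace Λ]
    (μ : Measure Λ) [IsProbabilityMeasure μ] (f g h : Λ → ℝ)
    (hmf : Measurable f) (hmg : Measurable g) (hmh : Measurable h)
    (hf : ∀ x, f x = -1 ∨ f x = 1)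
    (hg : ∀ x, g x = -1 ∨ g x = 1)
    (hh : ∀ x, h x = -1 ∨ h x = 1) :
    (∫ x, f x * g x ∂μ) + (∫ x, g x * h x ∂μ) + (∫ x, f x * h x ∂μ) ≥ -1 := by
  have ifg : Integrable (fun x => f x * g x) μ := by
    refine (integrable_const (1:ℝ)).mono' (hmf.mul hmg).aestronglyMeasurable
      (ae_of_all _ fun x => ?_)
    rcases hf x with h1 | h1 <;> rcases hg x with h2 | h2 <;> simp [h1, h2]
  have igh : Integrable (fun x => g x * h x) μ := by
    refine (integrable_const (1:ℝ)).mono' (hmg.mul hmh).aestronglyMeasurable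
      (ae_of_all _ fun x => ?_)
    rcases hg x with h1 | h1 <;> rcases hh x with h2 | h2 <;> simp [h1, h2]
  have ifh : Integrable (fun x => f x * h x) μ := by
    refine (integrable_const (1:ℝ)).mono' (hmf.mul hmh).aestronglyMeasurable
      (ae_of_all _ fun x => ?_)
    rcases hf x with h1 | h1 <;> rcases hh x with h2 | h2 <;> simp [h1, h2]
  have key : ∫ x, (-1 : ℝ) ∂μ ≤ ∫ x, (f x * g x + g x * h x + f x * h x) ∂μ := by
    refine integral_mono (integrable_const _) ((ifg.add igh).add ifh) fun x => ?_
    rcases hf x with h1 | h1 <;> rcases hg x with h2 | h2 <;>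
      rcases hh x with h3 | h3 <;> simp [h1, h2, h3] <;> norm_num
  rw [integral_const] at key
  simp only [measure_univ, probReal_univ, ENNReal.toReal_one, smul_eq_mul, one_mul] at key
  have e1 := integral_add (ifg.add igh) ifh
  have e2 := integral_add ifg igh
  simp only [Pi.add_apply] at e1 e2
  rw [e1, e2] at key
  linarith
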